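/- Let K = ℚ(ζ₅) with ring of integers 𝓞, let ι : K → ℂ be the embedding with ι(ζ₅) = exp(2πi/5) and σ : K → ℂ the embedding with σ(ζ₅) = exp(4πi/5), and let S = {z ∈ 𝓞 : |σ(z)| ≤ 1}. Then the image ι(S) is a discrete subset of ℂ: every point of ℂ has a neighborhood containing at most one point of ι(S). -/

import Mathlib

open NumberField

private lemma exp_ne_aux (a b : ℤ) (hab : a ≠ b) (hlt : |a - b| < 10) :
    Complex.exp ((a : ℂ) * Real.pi * Complex.I / 5) ≠
      Complex.exp ((b : ℂ) * Real.pi * Complex.I / 5) := by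
  intro h
  rw [Complex.exp_eq_exp_iff_exists_int] at h
  obtain ⟨n, hn⟩ := h
  have hπ : (Real.pi : ℂ) ≠ 0 := Complex.ofReal_ne_zero.mpr Real.pi_ne_zero
  have h2 : ((a : ℂ) - b - 10 * n) * ((Real.pi : ℂ) * Complex.I / 5) = 0 := by
    linear_combination hn
  have h3 : ((a : ℂ) - b - 10 * n) = 0 := by
    rcases mul_eq_zero.mp h2 with h | h
    · exact h
    · exfalso
      field_simp at h
      simp [hπ, Complex.I_ne_zero] at h
  have h4 : (a : ℤ) - b - 10 * n = 0 := by exact_mod_cast h3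
  rcases abs_lt.mp hlt with ⟨hl, hr⟩
  omega

private lemma prod_abs_embeddings (K : Type*) [Field K] [NumberField K] (x : K) :
    |(Algebra.norm ℚ x : ℚ)| = ∏ φ : K →+* ℂ, ‖φ x‖ := by
  have h := congr_arg (‖·‖) (Algebra.norm_eq_prod_embeddings ℚ ℂ x)
  rw [norm_prod] at h
  rw [show (∏ φ : K →+* ℂ, ‖φ x‖) = ∏ f : K →ₐ[ℚ] ℂ, ‖f x‖ from
    Fintype.prod_equiv (RingHom.equivRatAlgHom K ℂ) _ _ (fun φ => rfl), ← h, eq_ratCast, Rat.cast_abs,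
    ← Real.norm_eq_abs, ← Complex.norm_real, Complex.ofReal_ratCast]

/-- For `K = ℚ(ζ₅)`, embeddings `ι, σ` as in the paper, and `S = {z ∈ 𝓞 | |σ z| ≤ 1}`:
the image `ι '' S` is a discrete subset of `ℂ`, i.e. every point of `ℂ` has a
neighborhood containing at most one point of `ι '' S`. -/
theorem stmt_14 (K : Type*) [Field K] [NumberField K] [IsCyclotomicExtension {5} ℚ K]
    (ζ : 𝓞 K) (hζ : IsPrimitiveRoot (ζ : K) 5)
    (ι σ : K →+* ℂ)
    (hι : ι (ζ : K) = Complex.exp (2 * Real.pi * Complex.I / 5))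
    (hσ : σ (ζ : K) = Complex.exp (4 * Real.pi * Complex.I / 5))
    (S : Set (𝓞 K)) (hS : S = {z : 𝓞 K | ‖σ (z : K)‖ ≤ 1}) :
    ∀ c : ℂ, ∃ U ∈ nhds c, (U ∩ (fun z : 𝓞 K => ι (z : K)) '' S).Subsingleton := by
  classical
  set ι' : K →+* ℂ := (starRingEnd ℂ).comp ι with hι'def
  set σ' : K →+* ℂ := (starRingEnd ℂ).comp σ with hσ'def
  have habsι' : ∀ x : K, ‖ι' x‖ = ‖ι x‖ := fun x =>
    Complex.norm_conj (ι x)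
  have habsσ' : ∀ x : K, ‖σ' x‖ = ‖σ x‖ := fun x =>
    Complex.norm_conj (σ x)
  -- values at ζ
  have hι2 : ι (ζ : K) = Complex.exp (((2 : ℤ) : ℂ) * Real.pi * Complex.I / 5) := by
    rw [hι]; norm_num
  have hσ2 : σ (ζ : K) = Complex.exp (((4 : ℤ) : ℂ) * Real.pi * Complex.I / 5) := by
    rw [hσ]; norm_num
  have hι'2 : ι' (ζ : K) = Complex.exp ((((-2) : ℤ) : ℂ) * Real.pi * Complex.I / 5) := by
    show (starRingEnd ℂ) (ι (ζ : K)) = _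
    rw [hι, ← Complex.exp_conj]
    congr 1
    simp [map_div₀, Complex.conj_I, map_ofNat]
  have hσ'2 : σ' (ζ : K) = Complex.exp ((((-4) : ℤ) : ℂ) * Real.pi * Complex.I / 5) := by
    show (starRingEnd ℂ) (σ (ζ : K)) = _
    rw [hσ, ← Complex.exp_conj]
    congr 1
    simp [map_div₀, Complex.conj_I, map_ofNat]
  -- pairwise distinct
  have dist4 : ∀ (f g : K →+* ℂ) (a b : ℤ),
      f (ζ : K) = Complex.exp ((a : ℂ) * Real.pi * Complex.I / 5) →
      g (ζ : K) = Complex.exp ((b : ℂ) * Real.pi * Complex.I / 5) →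
      a ≠ b → |a - b| < 10 → f ≠ g := by
    intro f g a b hf hg hab hlt hfg
    exact exp_ne_aux a b hab hlt (by rw [← hf, ← hg, hfg])
  have d12 : ι ≠ ι' := dist4 _ _ 2 (-2) hι2 hι'2 (by norm_num) (by norm_num)
  have d13 : ι ≠ σ := dist4 _ _ 2 4 hι2 hσ2 (by norm_num) (by norm_num)
  have d14 : ι ≠ σ' := dist4 _ _ 2 (-4) hι2 hσ'2 (by norm_num) (by norm_num)
  have d23 : ι' ≠ σ := dist4 _ _ (-2) 4 hι'2 hσ2 (by norm_num) (by norm_num)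
  have d24 : ι' ≠ σ' := dist4 _ _ (-2) (-4) hι'2 hσ'2 (by norm_num) (by norm_num)
  have d34 : σ ≠ σ' := dist4 _ _ 4 (-4) hσ2 hσ'2 (by norm_num) (by norm_num)
  -- cardinality
  have hcard : Fintype.card (K →+* ℂ) = 4 := by
    rw [NumberField.Embeddings.card K ℂ,
      IsCyclotomicExtension.finrank (n := 5) K
        (Polynomial.cyclotomic.irreducible_rat (by norm_num))]
    decide
  have h1 : ι ∉ ({ι', σ, σ'} : Finset (K →+* ℂ)) := by simp [d12, d13, d14]
  have h2 : ι' ∉ ({σ, σ'} : Finset (K →+* ℂ)) := by simp [d23, d24]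
  have h3 : σ ∉ ({σ'} : Finset (K →+* ℂ)) := by simp [d34]
  have hF : ({ι, ι', σ, σ'} : Finset (K →+* ℂ)) = Finset.univ := by
    apply Finset.eq_univ_of_card
    rw [hcard, Finset.card_insert_of_notMem h1, Finset.card_insert_of_notMem h2,
      Finset.card_insert_of_notMem h3, Finset.card_singleton]
  -- key norm bound
  have key : ∀ w : 𝓞 K, w ≠ 0 →
      1 ≤ ‖ι (w : K)‖ ^ 2 * ‖σ (w : K)‖ ^ 2 := by
    intro w hw
    have hn0 : Algebra.norm ℤ w ≠ 0 := by
      rw [Algebra.norm_ne_zero_iff]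
      exact hw
    have h1' : (1 : ℝ) ≤ ((|(Algebra.norm ℚ (w : K) : ℚ)| : ℚ) : ℝ) := by
      rw [← Algebra.coe_norm_int]
      exact_mod_cast Int.one_le_abs hn0
    have h2' := prod_abs_embeddings K (w : K)
    rw [← hF, Finset.prod_insert h1, Finset.prod_insert h2, Finset.prod_insert h3,
      Finset.prod_singleton] at h2'
    have := h1'.trans_eq h2'
    rw [habsι', habsσ'] at this
    calc (1 : ℝ) ≤ ‖ι (w : K)‖ * (‖ι (w : K)‖ *
          (‖σ (w : K)‖ * ‖σ (w : K)‖)) := by exact_mod_cast this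
      _ = ‖ι (w : K)‖ ^ 2 * ‖σ (w : K)‖ ^ 2 := by ring
  -- main argument
  intro c
  refine ⟨Metric.ball c (1/4), Metric.ball_mem_nhds c (by norm_num), ?_⟩
  rintro x ⟨hxb, z₁, hz₁, rfl⟩ y ⟨hyb, z₂, hz₂, rfl⟩
  simp only
  by_contra hne
  have hwne : z₁ - z₂ ≠ 0 := by
    intro h
    apply hne
    have : z₁ = z₂ := by rwa [sub_eq_zero] at h
    rw [this]
  have hσw : ‖σ ((z₁ - z₂ : 𝓞 K) : K)‖ ≤ 2 := by
    push_cast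
    rw [map_sub]
    calc ‖σ (z₁ : K) - σ (z₂ : K)‖
        ≤ ‖σ (z₁ : K)‖ + ‖σ (z₂ : K)‖ := norm_sub_le _ _
      _ ≤ 1 + 1 := by
          rw [hS] at hz₁ hz₂
          exact add_le_add hz₁ hz₂
      _ = 2 := by norm_num
  have hιw : ‖ι ((z₁ - z₂ : 𝓞 K) : K)‖ < 1/2 := by
    push_cast
    rw [map_sub, ← Complex.dist_eq]
    calc dist (ι (z₁ : K)) (ι (z₂ : K)) ≤ dist (ι (z₁ : K)) c + dist c (ι (z₂ : K)) :=
          dist_triangle _ _ _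
      _ < 1/4 + 1/4 := by
          refine add_lt_add (Metric.mem_ball.mp hxb) ?_
          rw [dist_comm]
          exact Metric.mem_ball.mp hyb
      _ = 1/2 := by norm_num
  have hk := key (z₁ - z₂) hwne
  have habsnn : (0:ℝ) ≤ ‖ι ((z₁ - z₂ : 𝓞 K) : K)‖ := norm_nonneg _
  have habsnn2 : (0:ℝ) ≤ ‖σ ((z₁ - z₂ : 𝓞 K) : K)‖ := norm_nonneg _
  have hA2 : ‖ι ((z₁ - z₂ : 𝓞 K) : K)‖ ^ 2 < 1/4 := by nlinarith
  have hB2 : ‖σ ((z₁ - z₂ : 𝓞 K) : K)‖ ^ 2 ≤ 4 := by nlinarith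
  nlinarith [hA2, hB2, sq_nonneg (‖ι ((z₁ - z₂ : 𝓞 K) : K)‖),
    sq_nonneg (‖σ ((z₁ - z₂ : 𝓞 K) : K)‖)]
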